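/- Every rational number q has a unique expression of the form q = Σ_{s=1}^∞ q_{-s}·(-1)^s/((s+1)!) + Σ_{r=1}^∞ q_r·(-1)^{r+1}·r!, where (q_n)_{n∈ℤ\{0}} are nonnegative integers satisfying 0 ≤ q_{-s} ≤ s for every s > 0 and 0 ≤ q_r ≤ r for every r > 0, and q_{-s} = q_r = 0 for all but finitely many r, s. That is, there exists a unique finitely supported function n ↦ q_n from ℤ\{0} to the nonnegative integers with q_n ≤ |n| for all n, such that q equals the stated (finite) sum. -/

import Mathlib

def ratCoeff (t : ℤ) : ℚ :=
  if t < 0 then (-1 : ℚ) ^ (-t).toNat / ((-t).toNat + 1).factorial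
  else (-1 : ℚ) ^ (t.toNat + 1) * (t.toNat).factorial

lemma ratCoeff_coe_succ (i : ℕ) :
    ratCoeff ((i : ℤ) + 1) = (-1 : ℚ) ^ i * (i + 1).factorial := by
  have h : ¬ ((i : ℤ) + 1 < 0) := by omega
  simp only [ratCoeff, if_neg h]
  have ht : ((i : ℤ) + 1).toNat = i + 1 := by omega
  rw [ht, pow_succ, pow_succ]
  ring

lemma ratCoeff_neg_succ (i : ℕ) :
    ratCoeff (-((i : ℤ) + 1)) = (-1 : ℚ) ^ (i + 1) / (i + 2).factorial := by
  have h : (-((i : ℤ) + 1) < 0) := by omega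
  simp only [ratCoeff, if_pos h, neg_neg]
  have ht : ((i : ℤ) + 1).toNat = i + 1 := by omega
  rw [ht]

lemma sumIdFact (N : ℕ) :
    (∑ i ∈ Finset.range N, (i + 1) * (i + 1).factorial) + 1 = (N + 1).factorial := by
  induction N with
  | zero => simp
  | succ n ih =>
    rw [Finset.sum_range_succ]
    have h : (n + 1 + 1).factorial = (n + 2) * (n + 1).factorial := rfl
    have hb : (n + 2) * (n + 1).factorial = (n + 1) * (n + 1).factorial + (n + 1).factorial := by ring
    omega

lemma fracSum (N : ℕ) :
    (∑ i ∈ Finset.range N, ((i : ℚ) + 1) / (i + 2).factorial)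
      = 1 - 1 / (N + 1).factorial := by
  induction N with
  | zero => simp
  | succ n ih =>
    rw [Finset.sum_range_succ, ih]
    have h1 : ((n + 1 + 2).factorial : ℚ) = (n + 3) * (n + 2).factorial := by
      rw [Nat.factorial_succ]; push_cast; ring
    have h1' : ((n + 1 + 1).factorial : ℚ) = (n + 2) * (n + 1).factorial := by
      rw [Nat.factorial_succ]; push_cast; ring
    have h2 : ((n + 1).factorial : ℚ) ≠ 0 := by positivity
    have h3 : ((n + 2).factorial : ℚ) = (n+2) * (n+1).factorial := by
      rw [Nat.factorial_succ]; push_cast; ring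
    have h4 : ((n:ℚ) + 2) ≠ 0 := by positivity
    push_cast
    rw [h1']
    field_simp
    ring


lemma intBound (N : ℕ) (d : ℕ → ℤ) (hd : ∀ i, d i ≤ i + 1) (hd' : ∀ i, -(i + 1) ≤ d i) :
    |∑ i ∈ Finset.range N, d i * (-1) ^ i * (i + 1).factorial|
      ≤ ((N + 1).factorial : ℤ) - 1 := by
  calc |∑ i ∈ Finset.range N, d i * (-1) ^ i * (i + 1).factorial|
      ≤ ∑ i ∈ Finset.range N, |d i * (-1) ^ i * ((i + 1).factorial : ℤ)| :=
        Finset.abs_sum_le_sum_abs _ _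
    _ ≤ ∑ i ∈ Finset.range N, ((i : ℤ) + 1) * (i + 1).factorial := by
        apply Finset.sum_le_sum
        intro i _
        rw [abs_mul, abs_mul]
        have h1 : |(-1 : ℤ) ^ i| = 1 := by
          rw [abs_pow]; norm_num
        rw [h1, mul_one]
        have h2 : |((i + 1).factorial : ℤ)| = (i + 1).factorial := abs_of_nonneg (by positivity)
        rw [h2]
        have : |d i| ≤ (i : ℤ) + 1 := abs_le.2 ⟨hd' i, hd i⟩
        exact mul_le_mul_of_nonneg_right this (by positivity)
    _ = ((N + 1).factorial : ℤ) - 1 := by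
        have := sumIdFact N
        push_cast [← this]
        ring

lemma intUnique (N : ℕ) (d : ℕ → ℤ) (hd : ∀ i, d i ≤ i + 1) (hd' : ∀ i, -(i + 1) ≤ d i)
    (h : ∑ i ∈ Finset.range N, d i * (-1) ^ i * (i + 1).factorial = 0) :
    ∀ i < N, d i = 0 := by
  induction N with
  | zero => omega
  | succ n ih =>
    rw [Finset.sum_range_succ] at h
    have hb := intBound n d hd hd'
    have hfac : (0:ℤ) < (n + 1).factorial := by positivity
    have habs : |d n * (-1) ^ n * ((n + 1).factorial : ℤ)| = |d n| * (n + 1).factorial := by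
      rw [abs_mul, abs_mul]
      have h1 : |(-1 : ℤ) ^ n| = 1 := by
        rw [abs_pow]; norm_num
      rw [h1, mul_one, abs_of_nonneg (by positivity : (0:ℤ) ≤ ((n + 1).factorial : ℤ))]
    have hdn : d n = 0 := by
      by_contra hne
      have h1 : (1:ℤ) ≤ |d n| := by
        rcases lt_or_gt_of_ne hne with h' | h' <;> [exact le_abs.2 (Or.inr (by omega)); exact le_abs.2 (Or.inl (by omega))]
      have h2 : ((n + 1).factorial : ℤ) ≤ |d n| * (n + 1).factorial :=
        le_mul_of_one_le_left (le_of_lt hfac) h1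
      have h3 : |d n * (-1) ^ n * ((n + 1).factorial : ℤ)|
          = |∑ i ∈ Finset.range n, d i * (-1) ^ i * (i + 1).factorial| := by
        have : d n * (-1) ^ n * ((n + 1).factorial : ℤ)
            = -(∑ i ∈ Finset.range n, d i * (-1) ^ i * (i + 1).factorial) := by linarith
        rw [this, abs_neg]
      rw [habs] at h3
      linarith
    intro i hi
    rcases Nat.lt_succ_iff_lt_or_eq.1 hi with h' | h'
    · exact ih (by rw [hdn] at h; simpa using h) i h'
    · rw [h']; exact hdn


lemma fracBound (N : ℕ) (d : ℕ → ℤ) (hd : ∀ i, d i ≤ i + 1) (hd' : ∀ i, -(i + 1) ≤ d i) :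
    |∑ i ∈ Finset.range N, (d i : ℚ) * (-1) ^ (i + 1) / (i + 2).factorial|
      ≤ 1 - 1 / (N + 1).factorial := by
  calc |∑ i ∈ Finset.range N, (d i : ℚ) * (-1) ^ (i + 1) / (i + 2).factorial|
      ≤ ∑ i ∈ Finset.range N, |(d i : ℚ) * (-1) ^ (i + 1) / (i + 2).factorial| :=
        Finset.abs_sum_le_sum_abs _ _
    _ ≤ ∑ i ∈ Finset.range N, ((i : ℚ) + 1) / (i + 2).factorial := by
        apply Finset.sum_le_sum
        intro i _
        rw [abs_div, abs_mul, abs_pow]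
        have h2 : |((i + 2).factorial : ℚ)| = (i + 2).factorial := abs_of_nonneg (by positivity)
        have h3 : |(d i : ℚ)| ≤ (i : ℚ) + 1 := by
          have h4 : |d i| ≤ (i : ℤ) + 1 := abs_le.2 ⟨hd' i, hd i⟩
          exact_mod_cast h4
        rw [h2]
        norm_num
        exact div_le_div_of_nonneg_right h3 (by positivity) |>.trans_eq rfl
    _ = 1 - 1 / (N + 1).factorial := fracSum N

lemma factDivDvd {i N : ℕ} (h : i < N) :
    (N + 2) ∣ (N + 2).factorial / (i + 2).factorial := by
  have h1 : (i + 2).factorial ∣ (N + 1).factorial :=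
    Nat.factorial_dvd_factorial (by omega)
  have h2 : (N + 2).factorial = (N + 2) * (N + 1).factorial := rfl
  rw [h2, Nat.mul_div_assoc _ h1]
  exact Dvd.intro _ rfl

lemma castFactDiv {i N : ℕ} (h : i ≤ N) :
    (((N + 2).factorial / (i + 2).factorial : ℕ) : ℚ)
      = ((N + 2).factorial : ℚ) / ((i + 2).factorial : ℚ) := by
  have h1 : (i + 2).factorial ∣ (N + 2).factorial :=
    Nat.factorial_dvd_factorial (by omega)
  exact Nat.cast_div h1 (by positivity)

lemma fracUnique (N : ℕ) (d : ℕ → ℤ) (hd : ∀ i, d i ≤ i + 1) (hd' : ∀ i, -(i + 1) ≤ d i)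
    (h : ∑ i ∈ Finset.range N, (d i : ℚ) * (-1) ^ (i + 1) / (i + 2).factorial = 0) :
    ∀ i < N, d i = 0 := by
  induction N with
  | zero => omega
  | succ n ih =>
    -- integer version of the scaled equation
    set T : ℤ := ∑ i ∈ Finset.range (n + 1),
      d i * (-1) ^ (i + 1) * (((n + 2).factorial / (i + 2).factorial : ℕ) : ℤ) with hT
    have hTQ : (T : ℚ) = 0 := by
      rw [hT]
      rw [Int.cast_sum]
      simp only [Int.cast_mul, Int.cast_pow, Int.cast_neg, Int.cast_one, Int.cast_natCast]
      have : (∑ i ∈ Finset.range (n + 1),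
          (d i : ℚ) * (-1) ^ (i + 1) * (((n + 2).factorial / (i + 2).factorial : ℕ) : ℚ))
          = ((n + 2).factorial : ℚ) *
            ∑ i ∈ Finset.range (n + 1), (d i : ℚ) * (-1) ^ (i + 1) / (i + 2).factorial := by
        rw [Finset.mul_sum]
        apply Finset.sum_congr rfl
        intro i hi
        rw [castFactDiv (by simpa using Nat.lt_succ_iff.1 (Finset.mem_range.1 hi))]
        have : ((i + 2).factorial : ℚ) ≠ 0 := by positivity
        field_simp
      rw [this, h, mul_zero]
    have hT0 : T = 0 := by exact_mod_cast hTQ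
    have hdn : d n = 0 := by
      have hsplit : T = (∑ i ∈ Finset.range n,
          d i * (-1) ^ (i + 1) * (((n + 2).factorial / (i + 2).factorial : ℕ) : ℤ))
          + d n * (-1) ^ (n + 1) * (((n + 2).factorial / (n + 2).factorial : ℕ) : ℤ) := by
        rw [hT, Finset.sum_range_succ]
      have hself : ((n + 2).factorial / (n + 2).factorial : ℕ) = 1 :=
        Nat.div_self (Nat.factorial_pos _)
      have hdvd : ((n : ℤ) + 2) ∣ ∑ i ∈ Finset.range n,
          d i * (-1) ^ (i + 1) * (((n + 2).factorial / (i + 2).factorial : ℕ) : ℤ) := by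
        apply Finset.dvd_sum
        intro i hi
        have := factDivDvd (Finset.mem_range.1 hi)
        have : ((n : ℤ) + 2) ∣ (((n + 2).factorial / (i + 2).factorial : ℕ) : ℤ) := by
          exact_mod_cast Int.natCast_dvd_natCast.2 this
        exact Dvd.dvd.mul_left this _
      have hdvd2 : ((n : ℤ) + 2) ∣ d n * (-1) ^ (n + 1) := by
        rw [hself] at hsplit
        have : d n * (-1) ^ (n + 1) = T - ∑ i ∈ Finset.range n,
            d i * (-1) ^ (i + 1) * (((n + 2).factorial / (i + 2).factorial : ℕ) : ℤ) := by
          rw [hsplit]; push_cast; ring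
        rw [this, hT0]
        exact dvd_sub (dvd_zero _) hdvd
      have hdvd3 : ((n : ℤ) + 2) ∣ d n := by
        have := hdvd2.mul_right ((-1) ^ (n + 1))
        have heq : d n * (-1) ^ (n + 1) * (-1) ^ (n + 1) = d n := by
          rw [mul_assoc, ← pow_add, ← two_mul, pow_mul]
          norm_num
        rwa [heq] at this
      have h1 := hd n
      have h2 := hd' n
      rcases hdvd3 with ⟨c, hc⟩
      have hc0 : c = 0 := by nlinarith [hc, h1, h2]
      rw [hc0, mul_zero] at hc
      exact hc
    intro i hi
    rcases Nat.lt_succ_iff_lt_or_eq.1 hi with h' | h'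
    · apply ih _ i h'
      rw [Finset.sum_range_succ, hdn] at h
      simpa using h
    · rw [h']; exact hdn


lemma fracExists (N : ℕ) : ∀ (q : ℚ), (∃ k : ℤ, q * (N + 1).factorial = k) →
    ∃ b : ℕ → ℕ, (∀ i, b i ≤ i + 1) ∧ ∃ m : ℤ,
      q = (∑ i ∈ Finset.range N, (b i : ℚ) * (-1) ^ (i + 1) / (i + 2).factorial) + m := by
  induction N with
  | zero =>
    intro q ⟨k, hk⟩
    refine ⟨fun _ => 0, fun i => by simp, k, ?_⟩
    have : q = (k : ℚ) := by simpa using hk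
    simp [this]
  | succ N ih =>
    intro q ⟨k, hk⟩
    obtain ⟨c, hc0, hc1, hdvd⟩ : ∃ c : ℤ, 0 ≤ c ∧ c < (N : ℤ) + 2 ∧
        ((N : ℤ) + 2) ∣ (k - c * (-1) ^ (N + 1)) := by
      refine ⟨((-1) ^ (N + 1) * k) % ((N : ℤ) + 2), Int.emod_nonneg _ (by omega),
        Int.emod_lt_of_pos _ (by omega), ?_⟩
      have h1 : ((N : ℤ) + 2) ∣ ((-1) ^ (N + 1) * k - ((-1) ^ (N + 1) * k) % ((N : ℤ) + 2)) :=
        Int.dvd_self_sub_of_emod_eq rfl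
      have hsq : ((-1 : ℤ)) ^ (N + 1) * (-1) ^ (N + 1) = 1 := by
        rw [← pow_add, ← two_mul, pow_mul]; norm_num
      have h2 : (k - (((-1) ^ (N + 1) * k) % ((N : ℤ) + 2)) * (-1) ^ (N + 1))
          = (-1) ^ (N + 1) * ((-1) ^ (N + 1) * k - ((-1) ^ (N + 1) * k) % ((N : ℤ) + 2)) := by
        calc k - (((-1) ^ (N + 1) * k) % ((N : ℤ) + 2)) * (-1) ^ (N + 1)
            = ((-1 : ℤ) ^ (N + 1) * (-1) ^ (N + 1)) * k
              - (((-1) ^ (N + 1) * k) % ((N : ℤ) + 2)) * (-1) ^ (N + 1) := by rw [hsq]; ring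
          _ = _ := by ring
      rw [h2]
      exact Dvd.dvd.mul_left h1 _
    obtain ⟨k', hk'⟩ := hdvd
    set q' : ℚ := q - c * (-1) ^ (N + 1) / (N + 2).factorial with hq'
    have hfac : ((N + 2).factorial : ℚ) = ((N : ℚ) + 2) * (N + 1).factorial := by
      rw [Nat.factorial_succ]; push_cast; ring
    have hfacne : ((N + 1).factorial : ℚ) ≠ 0 := by positivity
    have hq'int : q' * (N + 1).factorial = (k' : ℚ) := by
      have h1 : ((N : ℚ) + 2) * (q' * (N + 1).factorial) = ((N : ℚ) + 2) * (k' : ℚ) := by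
        have hkq : (q * ((N + 1 + 1).factorial : ℚ)) = (k : ℚ) := hk
        have hkk' : ((k : ℚ) - c * (-1) ^ (N + 1)) = ((N : ℚ) + 2) * k' := by
          exact_mod_cast congrArg (Int.cast : ℤ → ℚ) hk'
        calc ((N : ℚ) + 2) * (q' * (N + 1).factorial)
            = q * (((N : ℚ) + 2) * (N + 1).factorial) - c * (-1) ^ (N + 1) *
              (((N : ℚ) + 2) * (N + 1).factorial) / (N + 2).factorial := by
              rw [hq']; field_simp
          _ = q * ((N + 2).factorial : ℚ) - c * (-1) ^ (N + 1) := by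
              rw [← hfac]; field_simp
          _ = (k : ℚ) - c * (-1) ^ (N + 1) := by
              rw [← hkq]
          _ = ((N : ℚ) + 2) * k' := hkk'
      exact mul_left_cancel₀ (by positivity) h1
    obtain ⟨b, hb, m, hm⟩ := ih q' ⟨k', hq'int⟩
    refine ⟨fun i => if i = N then c.toNat else b i, ?_, m, ?_⟩
    · intro i
      show (if i = N then c.toNat else b i) ≤ i + 1
      by_cases h : i = N
      · rw [if_pos h, h]; omega
      · rw [if_neg h]; exact hb i
    · rw [Finset.sum_range_succ]
      have hsum : (∑ i ∈ Finset.range N,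
          ((if i = N then c.toNat else b i : ℕ) : ℚ) * (-1) ^ (i + 1) / (i + 2).factorial)
          = ∑ i ∈ Finset.range N, (b i : ℚ) * (-1) ^ (i + 1) / (i + 2).factorial := by
        apply Finset.sum_congr rfl
        intro i hi
        rw [if_neg (Nat.ne_of_lt (Finset.mem_range.1 hi))]
      rw [hsum]
      have hval : ((fun i => if i = N then c.toNat else b i) N : ℕ) = c.toNat := by simp
      rw [hval]
      have hct : ((c.toNat : ℕ) : ℚ) = (c : ℚ) := by exact_mod_cast Int.toNat_of_nonneg hc0
      rw [hct, hq'] at *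
      linarith [hm]


def intPos (N : ℕ) : ℤ :=
  ∑ i ∈ Finset.range N, (if Even i then ((i : ℤ) + 1) * (i + 1).factorial else 0)

def intNeg (N : ℕ) : ℤ :=
  ∑ i ∈ Finset.range N, (if Even i then 0 else ((i : ℤ) + 1) * (i + 1).factorial)

lemma intPos_nonneg (N : ℕ) : 0 ≤ intPos N :=
  Finset.sum_nonneg fun i _ => by split <;> positivity

lemma intNeg_nonneg (N : ℕ) : 0 ≤ intNeg N :=
  Finset.sum_nonneg fun i _ => by split <;> positivity

lemma intPos_succ (N : ℕ) : intPos (N + 1)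
    = intPos N + (if Even N then ((N : ℤ) + 1) * (N + 1).factorial else 0) :=
  Finset.sum_range_succ _ _

lemma intNeg_succ (N : ℕ) : intNeg (N + 1)
    = intNeg N + (if Even N then 0 else ((N : ℤ) + 1) * (N + 1).factorial) :=
  Finset.sum_range_succ _ _

lemma pos_add_neg (N : ℕ) : intPos N + intNeg N = ((N + 1).factorial : ℤ) - 1 := by
  have h := sumIdFact N
  have h1 : intPos N + intNeg N = ∑ i ∈ Finset.range N, ((i : ℤ) + 1) * (i + 1).factorial := by
    rw [intPos, intNeg, ← Finset.sum_add_distrib]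
    apply Finset.sum_congr rfl
    intro i _
    split <;> ring
  have h2 : (∑ i ∈ Finset.range N, ((i : ℤ) + 1) * (i + 1).factorial)
      = ((∑ i ∈ Finset.range N, (i + 1) * (i + 1).factorial : ℕ) : ℤ) := by
    push_cast
    apply Finset.sum_congr rfl
    intro i _
    ring
  rw [h1, h2]
  omega

lemma intPos_mono : Monotone intPos := by
  apply monotone_nat_of_le_succ
  intro n
  rw [intPos_succ]
  have : (0:ℤ) ≤ (if Even n then ((n : ℤ) + 1) * (n + 1).factorial else 0) := by
    split <;> positivity
  omega

lemma intNeg_mono : Monotone intNeg := by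
  apply monotone_nat_of_le_succ
  intro n
  rw [intNeg_succ]
  have : (0:ℤ) ≤ (if Even n then 0 else ((n : ℤ) + 1) * (n + 1).factorial) := by
    split <;> positivity
  omega

lemma parts_grow (k : ℕ) : (k : ℤ) ≤ intPos (2 * k + 1) ∧ (k : ℤ) ≤ intNeg (2 * k + 2) := by
  induction k with
  | zero => refine ⟨by simpa using intPos_nonneg 1, by simpa using intNeg_nonneg 2⟩
  | succ n ih =>
    have e1 : 2 * (n + 1) + 1 = (2 * n + 2) + 1 := by ring
    have e2 : 2 * (n + 1) + 2 = (2 * n + 3) + 1 := by ring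
    constructor
    · have hev2 : Even (2 * n + 2) := by simp [Nat.even_iff]
      rw [e1, intPos_succ, if_pos hev2]
      have h1 : intPos (2 * n + 1) ≤ intPos (2 * n + 2) := intPos_mono (by omega)
      have h3 : (1:ℤ) ≤ (((2 * n + 2 : ℕ) : ℤ) + 1) * (2 * n + 2 + 1).factorial := by
        have : (1:ℤ) ≤ ((2 * n + 2 + 1).factorial : ℤ) := by
          exact_mod_cast Nat.one_le_iff_ne_zero.2 (Nat.factorial_ne_zero _)
        nlinarith
      push_cast at h3 ⊢
      have := ih.1
      push_cast at this
      linarith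
    · rw [e2, intNeg_succ, if_neg (by simp [Nat.even_iff] : ¬ Even (2 * n + 3))]
      have h1 : intNeg (2 * n + 2) ≤ intNeg (2 * n + 3) := intNeg_mono (by omega)
      have h3 : (1:ℤ) ≤ (((2 * n + 3 : ℕ) : ℤ) + 1) * (2 * n + 3 + 1).factorial := by
        have : (1:ℤ) ≤ ((2 * n + 3 + 1).factorial : ℤ) := by
          exact_mod_cast Nat.one_le_iff_ne_zero.2 (Nat.factorial_ne_zero _)
        nlinarith
      push_cast at h3 ⊢
      have := ih.2
      push_cast at this
      linarith

lemma parts_cover (m : ℤ) : ∃ N, -intNeg N ≤ m ∧ m ≤ intPos N := by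
  refine ⟨2 * m.natAbs + 2, ?_, ?_⟩
  · have h1 := (parts_grow m.natAbs).2
    have h2 : -m ≤ (m.natAbs : ℤ) := by omega
    linarith
  · have h1 := (parts_grow m.natAbs).1
    have h2 : intPos (2 * m.natAbs + 1) ≤ intPos (2 * m.natAbs + 2) := intPos_mono (by omega)
    have h3 : m ≤ (m.natAbs : ℤ) := by omega
    linarith

lemma intExists (N : ℕ) : ∀ m : ℤ, -intNeg N ≤ m → m ≤ intPos N →
    ∃ a : ℕ → ℕ, (∀ i, a i ≤ i + 1) ∧
      m = ∑ i ∈ Finset.range N, (a i : ℤ) * (-1) ^ i * (i + 1).factorial := by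
  induction N with
  | zero =>
    intro m h1 h2
    refine ⟨fun _ => 0, fun i => by simp, ?_⟩
    simp only [intPos, intNeg, Finset.range_zero, Finset.sum_empty] at h1 h2 ⊢
    omega
  | succ N ih =>
    intro m h1 h2
    have hpn := pos_add_neg N
    have hcast : (((N + 2) * (N + 1).factorial : ℕ) : ℤ)
        = ((N:ℤ) + 2) * ((N + 1).factorial : ℤ) := by push_cast; ring
    have hsplit2 : ((N:ℤ) + 2) * ((N + 1).factorial : ℤ)
        = ((N:ℤ) + 1) * (N + 1).factorial + (N + 1).factorial := by ring
    by_cases hev : Even N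
    · have hP : intPos (N + 1) = intPos N + ((N : ℤ) + 1) * (N + 1).factorial := by
        rw [intPos_succ, if_pos hev]
      have hQ : intNeg (N + 1) = intNeg N := by rw [intNeg_succ, if_pos hev]; ring
      set t : ℤ := m + intNeg N with ht
      have ht0 : 0 ≤ t := by rw [hQ] at h1; omega
      have ht1 : t ≤ ((N : ℤ) + 2) * (N + 1).factorial - 1 := by
        rw [hP] at h2
        linarith
      set aN : ℕ := t.toNat / (N + 1).factorial with haN
      have h5 : t.toNat < (N + 2) * (N + 1).factorial := by omega
      have haN1 : aN ≤ N + 1 := by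
        have := (Nat.div_lt_iff_lt_mul (Nat.factorial_pos (N + 1))).2 h5
        omega
      obtain ⟨r, hr, hreq⟩ : ∃ r : ℕ, r < (N + 1).factorial ∧ r + aN * (N + 1).factorial = t.toNat :=
        ⟨_, Nat.mod_lt _ (Nat.factorial_pos _), Nat.mod_add_div' _ _⟩
      have h6 : (t.toNat : ℤ) = t := Int.toNat_of_nonneg ht0
      have hreqZ : (r : ℤ) + (aN : ℤ) * ((N + 1).factorial : ℤ) = t := by
        rw [← h6]; exact_mod_cast hreq
      have hrZ : (r : ℤ) < ((N + 1).factorial : ℤ) := by exact_mod_cast hr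
      have hr0 : (0:ℤ) ≤ (r : ℤ) := Int.natCast_nonneg r
      set m' : ℤ := m - (aN : ℤ) * (N + 1).factorial with hm'
      have hm'1 : -intNeg N ≤ m' := by rw [hm', ht] at *; linarith
      have hm'2 : m' ≤ intPos N := by rw [hm', ht] at *; linarith
      obtain ⟨a, ha, hsum⟩ := ih m' hm'1 hm'2
      refine ⟨fun i => if i = N then aN else a i, ?_, ?_⟩
      · intro i
        show (if i = N then aN else a i) ≤ i + 1
        by_cases h : i = N
        · rw [if_pos h, h]; omega
        · rw [if_neg h]; exact ha i
      · rw [Finset.sum_range_succ]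
        have hcong : (∑ i ∈ Finset.range N,
            ((if i = N then aN else a i : ℕ) : ℤ) * (-1) ^ i * (i + 1).factorial)
            = ∑ i ∈ Finset.range N, (a i : ℤ) * (-1) ^ i * (i + 1).factorial := by
          apply Finset.sum_congr rfl
          intro i hi
          rw [if_neg (Nat.ne_of_lt (Finset.mem_range.1 hi))]
        rw [hcong, ← hsum]
        have hval : ((fun i => if i = N then aN else a i) N : ℕ) = aN := by simp
        rw [hval, hev.neg_one_pow, hm']
        ring
    · have hodd : Odd N := Nat.odd_iff.2 (by have := Nat.even_iff.not.1 hev; omega)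
      have hP : intPos (N + 1) = intPos N := by rw [intPos_succ, if_neg hev]; ring
      have hQ : intNeg (N + 1) = intNeg N + ((N : ℤ) + 1) * (N + 1).factorial := by
        rw [intNeg_succ, if_neg hev]
      set t : ℤ := intPos N - m with ht
      have ht0 : 0 ≤ t := by rw [hP] at h2; omega
      have ht1 : t ≤ ((N : ℤ) + 2) * (N + 1).factorial - 1 := by
        rw [hQ] at h1
        linarith
      set aN : ℕ := t.toNat / (N + 1).factorial with haN
      have h5 : t.toNat < (N + 2) * (N + 1).factorial := by omega
      have haN1 : aN ≤ N + 1 := by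
        have := (Nat.div_lt_iff_lt_mul (Nat.factorial_pos (N + 1))).2 h5
        omega
      obtain ⟨r, hr, hreq⟩ : ∃ r : ℕ, r < (N + 1).factorial ∧ r + aN * (N + 1).factorial = t.toNat :=
        ⟨_, Nat.mod_lt _ (Nat.factorial_pos _), Nat.mod_add_div' _ _⟩
      have h6 : (t.toNat : ℤ) = t := Int.toNat_of_nonneg ht0
      have hreqZ : (r : ℤ) + (aN : ℤ) * ((N + 1).factorial : ℤ) = t := by
        rw [← h6]; exact_mod_cast hreq
      have hrZ : (r : ℤ) < ((N + 1).factorial : ℤ) := by exact_mod_cast hr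
      have hr0 : (0:ℤ) ≤ (r : ℤ) := Int.natCast_nonneg r
      set m' : ℤ := m + (aN : ℤ) * (N + 1).factorial with hm'
      have hm'2 : m' ≤ intPos N := by rw [hm', ht] at *; linarith
      have hm'1 : -intNeg N ≤ m' := by rw [hm', ht] at *; linarith
      obtain ⟨a, ha, hsum⟩ := ih m' hm'1 hm'2
      refine ⟨fun i => if i = N then aN else a i, ?_, ?_⟩
      · intro i
        show (if i = N then aN else a i) ≤ i + 1
        by_cases h : i = N
        · rw [if_pos h, h]; omega
        · rw [if_neg h]; exact ha i
      · rw [Finset.sum_range_succ]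
        have hcong : (∑ i ∈ Finset.range N,
            ((if i = N then aN else a i : ℕ) : ℤ) * (-1) ^ i * (i + 1).factorial)
            = ∑ i ∈ Finset.range N, (a i : ℤ) * (-1) ^ i * (i + 1).factorial := by
          apply Finset.sum_congr rfl
          intro i hi
          rw [if_neg (Nat.ne_of_lt (Finset.mem_range.1 hi))]
        rw [hcong, ← hsum]
        have hval : ((fun i => if i = N then aN else a i) N : ℕ) = aN := by simp
        rw [hval, hodd.neg_one_pow, hm']
        ring


lemma bridge (f : ℤ →₀ ℕ) (hb : ∀ n : ℤ, f n ≤ n.natAbs) (N : ℕ)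
    (hN : ∀ n ∈ f.support, n.natAbs ≤ N) :
    ∑ n ∈ f.support, (f n : ℚ) * ratCoeff n
      = (∑ i ∈ Finset.range N, (f ((i : ℤ) + 1) : ℚ) * ratCoeff ((i : ℤ) + 1))
      + ∑ i ∈ Finset.range N, (f (-((i : ℤ) + 1)) : ℚ) * ratCoeff (-((i : ℤ) + 1)) := by
  classical
  set P := (Finset.range N).image (fun i : ℕ => (i : ℤ) + 1) with hP
  set Q := (Finset.range N).image (fun i : ℕ => -((i : ℤ) + 1)) with hQ
  have hdisj : Disjoint P Q := by
    rw [Finset.disjoint_left]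
    intro x hx hx'
    rw [hP, Finset.mem_image] at hx
    rw [hQ, Finset.mem_image] at hx'
    obtain ⟨i, _, hi⟩ := hx
    obtain ⟨j, _, hj⟩ := hx'
    omega
  have hsub : f.support ⊆ P ∪ Q := by
    intro n hn
    have hne : f n ≠ 0 := Finsupp.mem_support_iff.1 hn
    have h1 : 1 ≤ n.natAbs := by
      have := hb n
      omega
    have h2 : n.natAbs ≤ N := hN n hn
    rw [Finset.mem_union, hP, hQ, Finset.mem_image, Finset.mem_image]
    rcases lt_or_gt_of_ne (by omega : n ≠ 0) with h | h
    · right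
      exact ⟨n.natAbs - 1, Finset.mem_range.2 (by omega), by omega⟩
    · left
      exact ⟨n.natAbs - 1, Finset.mem_range.2 (by omega), by omega⟩
  rw [Finset.sum_subset hsub (fun x _ hx => by
    rw [Finsupp.notMem_support_iff.1 hx]; simp)]
  rw [Finset.sum_union hdisj]
  congr 1
  · rw [hP, Finset.sum_image (by intro a _ b _ h; beta_reduce at h; omega)]
  · rw [hQ, Finset.sum_image (by intro a _ b _ h; beta_reduce at h; omega)]


lemma exists_rep (x : ℚ) : ∃ f : ℤ →₀ ℕ, (∀ n : ℤ, f n ≤ n.natAbs) ∧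
    x = ∑ n ∈ f.support, (f n : ℚ) * ratCoeff n := by
  classical
  -- denominator divisibility
  obtain ⟨c, hc⟩ : x.den ∣ (x.den + 1).factorial :=
    dvd_trans (Nat.dvd_factorial x.pos le_rfl) (Nat.factorial_dvd_factorial (Nat.le_succ _))
  have hden : ∃ k : ℤ, x * ((x.den + 1).factorial) = k := by
    refine ⟨x.num * c, ?_⟩
    have h0 : ((x.den : ℚ)) ≠ 0 := by
      have := x.pos
      positivity
    have h1 : (((x.den + 1).factorial : ℕ) : ℚ) = (x.den : ℚ) * (c : ℚ) := by
      exact_mod_cast congrArg (Nat.cast : ℕ → ℚ) hc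
    rw [h1]
    push_cast
    have h2 : x * (x.den : ℚ) = (x.num : ℚ) := Rat.mul_den_eq_num x
    calc x * ((x.den : ℚ) * (c : ℚ)) = (x * (x.den : ℚ)) * c := by ring
      _ = (x.num : ℚ) * c := by rw [h2]
  obtain ⟨b, hbb, m, hm⟩ := fracExists x.den x hden
  obtain ⟨N2, hm1, hm2⟩ := parts_cover m
  obtain ⟨a, ha, hsum⟩ := intExists N2 m hm1 hm2
  set N : ℕ := max x.den N2 with hN
  set a' : ℕ → ℕ := fun i => if i < N2 then a i else 0 with ha'
  set b' : ℕ → ℕ := fun i => if i < x.den then b i else 0 with hb'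
  have ha'bound : ∀ i, a' i ≤ i + 1 := by
    intro i; rw [ha']; dsimp only; split
    · exact ha i
    · omega
  have hb'bound : ∀ i, b' i ≤ i + 1 := by
    intro i; rw [hb']; dsimp only; split
    · exact hbb i
    · omega
  set g : ℤ → ℕ := fun n =>
    if 0 < n then a' (n.toNat - 1) else if n < 0 then b' ((-n).toNat - 1) else 0 with hgdef
  set S : Finset ℤ := (Finset.range N).image (fun i : ℕ => (i : ℤ) + 1)
      ∪ (Finset.range N).image (fun i : ℕ => -((i : ℤ) + 1)) with hS
  have hgsupp : ∀ n : ℤ, g n ≠ 0 → n ∈ S := by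
    intro n hn
    rw [hgdef] at hn
    dsimp only at hn
    rw [hS, Finset.mem_union, Finset.mem_image, Finset.mem_image]
    by_cases h1 : 0 < n
    · rw [if_pos h1] at hn
      left
      have h2 : n.toNat - 1 < N2 := by
        by_contra h3
        rw [ha'] at hn
        simp only [if_neg h3] at hn
        exact hn rfl
      exact ⟨n.toNat - 1, Finset.mem_range.2 (by omega), by omega⟩
    · rw [if_neg h1] at hn
      by_cases h2 : n < 0
      · rw [if_pos h2] at hn
        right
        have h3 : (-n).toNat - 1 < x.den := by
          by_contra h4
          rw [hb'] at hn
          simp only [if_neg h4] at hn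
          exact hn rfl
        exact ⟨(-n).toNat - 1, Finset.mem_range.2 (by omega), by omega⟩
      · rw [if_neg h2] at hn
        exact absurd rfl hn
  set f : ℤ →₀ ℕ := Finsupp.onFinset S g hgsupp with hf
  have hfapp : ∀ n, f n = g n := fun n => rfl
  have hbound : ∀ n : ℤ, f n ≤ n.natAbs := by
    intro n
    rw [hfapp, hgdef]
    dsimp only
    by_cases h1 : 0 < n
    · rw [if_pos h1]
      have := ha'bound (n.toNat - 1)
      omega
    · rw [if_neg h1]
      by_cases h2 : n < 0
      · rw [if_pos h2]
        have := hb'bound ((-n).toNat - 1)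
        omega
      · rw [if_neg h2]; omega
  have hsupp : ∀ n ∈ f.support, n.natAbs ≤ N := by
    intro n hn
    have h1 : n ∈ S := Finsupp.support_onFinset_subset hn
    rw [hS, Finset.mem_union, Finset.mem_image, Finset.mem_image] at h1
    rcases h1 with ⟨i, hi, rfl⟩ | ⟨i, hi, rfl⟩ <;>
      · rw [Finset.mem_range] at hi; omega
  refine ⟨f, hbound, ?_⟩
  rw [bridge f hbound N hsupp]
  have hposval : ∀ i ∈ Finset.range N, (f ((i : ℤ) + 1) : ℚ) * ratCoeff ((i : ℤ) + 1)
      = (a' i : ℚ) * ((-1 : ℚ) ^ i * (i + 1).factorial) := by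
    intro i _
    rw [ratCoeff_coe_succ, hfapp, hgdef]
    dsimp only
    rw [if_pos (by omega : (0:ℤ) < (i:ℤ) + 1)]
    have h2 : ((i:ℤ) + 1).toNat - 1 = i := by omega
    rw [h2]
  have hnegval : ∀ i ∈ Finset.range N, (f (-((i : ℤ) + 1)) : ℚ) * ratCoeff (-((i : ℤ) + 1))
      = (b' i : ℚ) * ((-1 : ℚ) ^ (i + 1) / (i + 2).factorial) := by
    intro i _
    rw [ratCoeff_neg_succ, hfapp, hgdef]
    dsimp only
    rw [if_neg (by omega : ¬ (0:ℤ) < -((i:ℤ) + 1)), if_pos (by omega : -((i:ℤ) + 1) < 0)]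
    have h2 : (-(-((i:ℤ) + 1))).toNat - 1 = i := by omega
    rw [h2]
  rw [Finset.sum_congr rfl hposval, Finset.sum_congr rfl hnegval]
  -- positive part equals m
  have hpos : (∑ i ∈ Finset.range N, (a' i : ℚ) * ((-1 : ℚ) ^ i * (i + 1).factorial)) = (m : ℚ) := by
    have h1 : (∑ i ∈ Finset.range N, (a' i : ℤ) * (-1) ^ i * ((i + 1).factorial : ℤ)) = m := by
      rw [← Finset.sum_subset (Finset.range_subset_range.2 (le_max_right x.den N2))
        (by
          intro i _ hi
          rw [Finset.mem_range, not_lt] at hi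
          rw [ha']
          simp only [if_neg (by omega : ¬ i < N2)]
          ring)]
      rw [hsum]
      apply Finset.sum_congr rfl
      intro i hi
      rw [ha']
      simp only [if_pos (Finset.mem_range.1 hi)]
    calc (∑ i ∈ Finset.range N, (a' i : ℚ) * ((-1 : ℚ) ^ i * (i + 1).factorial))
        = ((∑ i ∈ Finset.range N, (a' i : ℤ) * (-1) ^ i * ((i + 1).factorial : ℤ) : ℤ) : ℚ) := by
          push_cast
          apply Finset.sum_congr rfl
          intro i _
          ring
      _ = (m : ℚ) := by rw [h1]
  -- negative part equals x - m
  have hneg : (∑ i ∈ Finset.range N, (b' i : ℚ) * ((-1 : ℚ) ^ (i + 1) / (i + 2).factorial))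
      = x - m := by
    have h1 : (∑ i ∈ Finset.range N, (b' i : ℚ) * ((-1 : ℚ) ^ (i + 1) / (i + 2).factorial))
        = ∑ i ∈ Finset.range x.den, (b i : ℚ) * (-1) ^ (i + 1) / (i + 2).factorial := by
      rw [← Finset.sum_subset (Finset.range_subset_range.2 (le_max_left x.den N2))
        (by
          intro i _ hi
          rw [Finset.mem_range, not_lt] at hi
          rw [hb']
          simp only [if_neg (by omega : ¬ i < x.den)]
          push_cast
          ring)]
      apply Finset.sum_congr rfl
      intro i hi
      rw [hb']
      simp only [if_pos (Finset.mem_range.1 hi)]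
      ring
    rw [h1]
    linarith [hm]
  rw [hpos, hneg]
  ring


lemma unique_rep (f g : ℤ →₀ ℕ) (hf : ∀ n : ℤ, f n ≤ n.natAbs) (hg : ∀ n : ℤ, g n ≤ n.natAbs)
    (h : ∑ n ∈ f.support, (f n : ℚ) * ratCoeff n = ∑ n ∈ g.support, (g n : ℚ) * ratCoeff n) :
    f = g := by
  classical
  set N : ℕ := (f.support ∪ g.support).sup Int.natAbs with hN
  have hNf : ∀ n ∈ f.support, n.natAbs ≤ N :=
    fun n hn => Finset.le_sup (Finset.mem_union_left _ hn)
  have hNg : ∀ n ∈ g.support, n.natAbs ≤ N :=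
    fun n hn => Finset.le_sup (Finset.mem_union_right _ hn)
  rw [bridge f hf N hNf, bridge g hg N hNg] at h
  set dpos : ℕ → ℤ := fun i => (f ((i : ℤ) + 1) : ℤ) - (g ((i : ℤ) + 1) : ℤ) with hdpos
  set dneg : ℕ → ℤ := fun i => (f (-((i : ℤ) + 1)) : ℤ) - (g (-((i : ℤ) + 1)) : ℤ) with hdneg
  have habs1 : ∀ i : ℕ, ((i : ℤ) + 1).natAbs = i + 1 := fun i => by omega
  have habs2 : ∀ i : ℕ, (-((i : ℤ) + 1)).natAbs = i + 1 := fun i => by omega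
  have hdpos1 : ∀ i, dpos i ≤ i + 1 := by
    intro i
    have h1 := hf ((i : ℤ) + 1)
    rw [habs1] at h1
    have h2 : (0:ℕ) ≤ g ((i:ℤ)+1) := Nat.zero_le _
    rw [hdpos]; dsimp only; omega
  have hdpos2 : ∀ i : ℕ, -((i:ℤ) + 1) ≤ dpos i := by
    intro i
    have h1 := hg ((i : ℤ) + 1)
    rw [habs1] at h1
    rw [hdpos]; dsimp only; omega
  have hdneg1 : ∀ i, dneg i ≤ i + 1 := by
    intro i
    have h1 := hf (-((i : ℤ) + 1))
    rw [habs2] at h1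
    rw [hdneg]; dsimp only; omega
  have hdneg2 : ∀ i : ℕ, -((i:ℤ) + 1) ≤ dneg i := by
    intro i
    have h1 := hg (-((i : ℤ) + 1))
    rw [habs2] at h1
    rw [hdneg]; dsimp only; omega
  -- integer sums
  set Bf : ℤ := ∑ i ∈ Finset.range N, (f ((i : ℤ) + 1) : ℤ) * (-1) ^ i * (i + 1).factorial with hBf
  set Bg : ℤ := ∑ i ∈ Finset.range N, (g ((i : ℤ) + 1) : ℤ) * (-1) ^ i * (i + 1).factorial with hBg
  have hcastf : (∑ i ∈ Finset.range N, (f ((i : ℤ) + 1) : ℚ) * ratCoeff ((i : ℤ) + 1)) = (Bf : ℚ) := by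
    rw [hBf]
    push_cast
    apply Finset.sum_congr rfl
    intro i _
    rw [ratCoeff_coe_succ]
    ring
  have hcastg : (∑ i ∈ Finset.range N, (g ((i : ℤ) + 1) : ℚ) * ratCoeff ((i : ℤ) + 1)) = (Bg : ℚ) := by
    rw [hBg]
    push_cast
    apply Finset.sum_congr rfl
    intro i _
    rw [ratCoeff_coe_succ]
    ring
  have hkey : (∑ i ∈ Finset.range N, (dneg i : ℚ) * (-1) ^ (i + 1) / (i + 2).factorial)
      = ((Bg - Bf : ℤ) : ℚ) := by
    have h2 : (∑ i ∈ Finset.range N, (dneg i : ℚ) * (-1) ^ (i + 1) / (i + 2).factorial)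
        = (∑ i ∈ Finset.range N, (f (-((i : ℤ) + 1)) : ℚ) * ratCoeff (-((i : ℤ) + 1)))
          - ∑ i ∈ Finset.range N, (g (-((i : ℤ) + 1)) : ℚ) * ratCoeff (-((i : ℤ) + 1)) := by
      rw [← Finset.sum_sub_distrib]
      apply Finset.sum_congr rfl
      intro i _
      rw [ratCoeff_neg_succ, hdneg]
      push_cast
      ring
    rw [h2]
    rw [hcastf, hcastg] at h
    push_cast
    linarith [h]
  -- the integer Bg - Bf has absolute value < 1
  have hBfg : Bf = Bg := by
    have h1 := fracBound N dneg hdneg1 hdneg2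
    rw [hkey] at h1
    have h2 : (0:ℚ) < 1 / (N + 1).factorial := by positivity
    have h3 : |((Bg - Bf : ℤ) : ℚ)| < 1 := lt_of_le_of_lt h1 (by linarith)
    have h4 : |Bg - Bf| < 1 := by exact_mod_cast h3
    have h5 := abs_lt.1 h4
    omega
  have hneg0 : ∀ i < N, dneg i = 0 := by
    apply fracUnique N dneg hdneg1 hdneg2
    rw [hkey, hBfg]
    simp
  have hpos0 : ∀ i < N, dpos i = 0 := by
    apply intUnique N dpos hdpos1 hdpos2
    have : (∑ i ∈ Finset.range N, dpos i * (-1) ^ i * ((i + 1).factorial : ℤ)) = Bf - Bg := by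
      rw [hBf, hBg, ← Finset.sum_sub_distrib]
      apply Finset.sum_congr rfl
      intro i _
      rw [hdpos]
      ring
    rw [this, hBfg]
    ring
  -- conclude
  ext n
  by_cases h0 : n = 0
  · have h1 := hf 0
    have h2 := hg 0
    simp only [Int.natAbs_zero, Nat.le_zero] at h1 h2
    rw [h0, h1, h2]
  by_cases hle : n.natAbs ≤ N
  · rcases lt_or_gt_of_ne h0 with hneg | hpos
    · have hi : n = -(((n.natAbs - 1 : ℕ) : ℤ) + 1) := by omega
      have := hneg0 (n.natAbs - 1) (by omega)
      rw [hdneg] at this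
      dsimp only at this
      rw [hi]
      omega
    · have hi : n = ((n.natAbs - 1 : ℕ) : ℤ) + 1 := by omega
      have := hpos0 (n.natAbs - 1) (by omega)
      rw [hdpos] at this
      dsimp only at this
      rw [hi]
      omega
  · have h1 : n ∉ f.support := fun hn => hle (hNf n hn)
    have h2 : n ∉ g.support := fun hn => hle (hNg n hn)
    rw [Finsupp.notMem_support_iff.1 h1, Finsupp.notMem_support_iff.1 h2]


/-- Every rational number `q` has a unique representation
`q = Σ_{s>0} q_{-s}·(-1)^s/((s+1)!) + Σ_{r>0} q_r·(-1)^{r+1}·r!` with finitely supported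
nonnegative integer coefficients satisfying `q_n ≤ |n|` for all nonzero `n`
(the bound forces `q_0 = 0`, so the coefficients are indexed by the nonzero integers). -/
theorem rat_unique_representation (x : ℚ) :
    ∃! f : ℤ →₀ ℕ, (∀ n : ℤ, f n ≤ n.natAbs) ∧
      x = ∑ n ∈ f.support, (f n : ℚ) * ratCoeff n := by
  obtain ⟨f, hb, hval⟩ := exists_rep x
  refine ⟨f, ⟨hb, hval⟩, ?_⟩
  intro y hy
  exact unique_rep y f hy.1 hb (hy.2.symm.trans hval)
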